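/- A subset σ of N({i,i+1}) (the neighborhood of {i,i+1} in KG_{2,k}) is a face of the neighborhood complex of KG_{2,k} that is NOT a face of the neighborhood complex of S_{2,k} if and only if C_σ = {i, i+1} and σ contains {j, j+1} for some j ≠ i in [k+4] (all arithmetic mod k+4). -/
import Mathlib


open Finset

/-- Potential vertices of `KG_{2,k}`: finite subsets of `[k+4]` (modelled as `ZMod (k+4)`);
actual vertices are those of cardinality 2. -/
abbrev Vtx (k : ℕ) := Finset (ZMod (k + 4))

/-- `S_σ`, the union of the pairs in `σ`. -/
def Sσ {k : ℕ} (σ : Finset (Vtx k)) : Finset (ZMod (k + 4)) := σ.sup id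

/-- `C_σ = [k+4] \ S_σ`. -/
def Cσ {k : ℕ} (σ : Finset (Vtx k)) : Finset (ZMod (k + 4)) := Finset.univ \ σ.sup id

/-- Adjacency in the Kneser graph `KG_{2,k}`: two 2-subsets that are disjoint. -/
def kgAdj {k : ℕ} (u v : Vtx k) : Prop := u.card = 2 ∧ v.card = 2 ∧ Disjoint u v

/-- A stable vertex: a 2-subset containing no two cyclically consecutive elements. -/
def IsStable {k : ℕ} (u : Vtx k) : Prop := u.card = 2 ∧ ∀ a ∈ u, a + 1 ∉ u

/-- Adjacency in `S_{2,k}`: a Kneser edge at least one of whose endpoints is stable. -/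
def sAdj {k : ℕ} (u v : Vtx k) : Prop := kgAdj u v ∧ (IsStable u ∨ IsStable v)

/-- `σ` is a face of the neighborhood complex `N(KG_{2,k})`: the members of `σ`
have a common neighbor in `KG_{2,k}`. -/
def kgFace {k : ℕ} (σ : Finset (Vtx k)) : Prop :=
  ∃ v : Vtx k, v.card = 2 ∧ ∀ u ∈ σ, kgAdj v u

/-- `σ` is a face of the neighborhood complex `N(S_{2,k})`. -/
def sFace {k : ℕ} (σ : Finset (Vtx k)) : Prop :=
  ∃ v : Vtx k, v.card = 2 ∧ ∀ u ∈ σ, sAdj v u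

section Aux

variable {k : ℕ}

lemma zne (m : ℕ) (h0 : 0 < m) (h4 : m < 4) : (m : ZMod (k + 4)) ≠ 0 := by
  haveI : NeZero (k + 4) := ⟨by omega⟩
  intro h
  have hd := (ZMod.natCast_eq_zero_iff m (k + 4)).mp h
  have := Nat.le_of_dvd h0 hd
  omega

lemma zne1 : (1 : ZMod (k + 4)) ≠ 0 := by simpa using zne (k := k) 1 (by omega) (by omega)
lemma zne2 : (2 : ZMod (k + 4)) ≠ 0 := by simpa using zne (k := k) 2 (by omega) (by omega)
lemma zne3 : (3 : ZMod (k + 4)) ≠ 0 := by simpa using zne (k := k) 3 (by omega) (by omega)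

lemma ne_add_one (x : ZMod (k + 4)) : x ≠ x + 1 := by
  intro h; exact zne1 (by linear_combination -h)

lemma stable_pair {x y : ZMod (k + 4)} (hxy : x ≠ y) (h1 : y ≠ x + 1) (h2 : x ≠ y + 1) :
    IsStable ({x, y} : Vtx k) := by
  refine ⟨by rw [card_insert_of_notMem (by simpa using hxy), card_singleton], ?_⟩
  intro a ha
  simp only [mem_insert, mem_singleton] at ha ⊢
  rcases ha with rfl | rfl
  · push_neg
    exact ⟨fun h => ne_add_one a h.symm, fun h => h1 h.symm⟩
  · push_neg
    exact ⟨fun h => h2 h.symm, fun h => ne_add_one a h.symm⟩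

lemma pair_not_stable (x : ZMod (k + 4)) : ¬ IsStable ({x, x + 1} : Vtx k) := by
  rintro ⟨-, h⟩
  exact h x (by simp) (by simp)

lemma pair_card (x : ZMod (k + 4)) : ({x, x + 1} : Vtx k).card = 2 := by
  rw [card_insert_of_notMem (by simpa using ne_add_one x), card_singleton]

lemma not_stable_pair {u : Vtx k} (hc : u.card = 2) (hns : ¬ IsStable u) :
    ∃ j : ZMod (k + 4), u = {j, j + 1} := by
  rw [IsStable] at hns
  push_neg at hns
  obtain ⟨a, ha, ha1⟩ := hns hc
  refine ⟨a, ?_⟩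
  symm
  apply Finset.eq_of_subset_of_card_le
  · intro x hx
    simp only [mem_insert, mem_singleton] at hx
    rcases hx with rfl | rfl <;> assumption
  · simp [hc, pair_card]

end Aux

/-- A subset `σ` of `N({i,i+1})` (the `KG_{2,k}`-neighborhood of
`{i,i+1}`) is a face of `N(KG_{2,k})` that is not a face of `N(S_{2,k})` iff
`C_σ = {i, i+1}` and `σ` contains `{j, j+1}` for some `j ≠ i` (mod `k+4`). -/
theorem mem_X_iff {k : ℕ} (i : ZMod (k + 4)) (σ : Finset (Vtx k))
    (hσ : ∀ u ∈ σ, kgAdj ({i, i + 1} : Vtx k) u) :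
    (kgFace σ ∧ ¬ sFace σ) ↔
      (Cσ σ = {i, i + 1} ∧ ∃ j : ZMod (k + 4), j ≠ i ∧ ({j, j + 1} : Vtx k) ∈ σ) := by
  have hkg : kgFace σ := ⟨{i, i + 1}, pair_card i, hσ⟩
  -- {i, i+1} ⊆ Cσ σ
  have hsub : ({i, i + 1} : Vtx k) ⊆ Cσ σ := by
    intro a ha
    simp only [Cσ, mem_sdiff, mem_univ, true_and]
    intro hS
    rw [Finset.mem_sup] at hS
    obtain ⟨u, hu, hau⟩ := hS
    have hd := (hσ u hu).2.2
    exact (Finset.disjoint_left.mp hd ha) hau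
  constructor
  · rintro ⟨-, hns⟩
    -- extract a non-stable member
    have hall : ¬ ∀ u ∈ σ, sAdj ({i, i + 1} : Vtx k) u := fun h => hns ⟨_, pair_card i, h⟩
    push_neg at hall
    obtain ⟨u, hu, hna⟩ := hall
    have hukg := hσ u hu
    have hust : ¬ IsStable u := by
      intro h
      exact hna ⟨hukg, Or.inr h⟩
    obtain ⟨j, rfl⟩ := not_stable_pair hukg.2.1 hust
    have hji : j ≠ i := by
      intro h
      exact (Finset.disjoint_left.mp hukg.2.2 (mem_insert_self i _)) (by simp [h])
    refine ⟨?_, j, hji, hu⟩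
    -- Cσ σ = {i, i+1}
    by_contra hC
    have hss : ({i, i + 1} : Vtx k) ⊂ Cσ σ := hsub.ssubset_of_ne (fun h => hC h.symm)
    obtain ⟨c, hcC, hci⟩ := Finset.exists_of_ssubset hss
    simp only [mem_insert, mem_singleton] at hci
    push_neg at hci
    -- build a stable common neighbor v ⊆ Cσ σ
    obtain ⟨v, hvst, hvC⟩ :
        ∃ v : Vtx k, IsStable v ∧ v ⊆ Cσ σ := by
      by_cases hcm : c = i - 1
      · refine ⟨{i + 1, i - 1}, stable_pair ?_ ?_ ?_, ?_⟩
        · intro h; exact zne2 (by linear_combination h)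
        · intro h; exact zne3 (by linear_combination -h)
        · intro h; exact zne1 (by linear_combination h)
        · intro a ha
          simp only [mem_insert, mem_singleton] at ha
          rcases ha with rfl | rfl
          · exact hsub (by simp)
          · exact hcm ▸ hcC
      · refine ⟨{i, c}, stable_pair hci.1.symm hci.2 ?_, ?_⟩
        · intro h
          exact hcm (by linear_combination -h)
        · intro a ha
          simp only [mem_insert, mem_singleton] at ha
          rcases ha with rfl | rfl
          · exact hsub (by simp)
          · exact hcC
    apply hns
    refine ⟨v, hvst.1, fun w hw => ⟨⟨hvst.1, (hσ w hw).2.1, ?_⟩, Or.inl hvst⟩⟩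
    -- Disjoint v w since v ⊆ Cσ σ and w ⊆ Sσ
    rw [Finset.disjoint_left]
    intro a hav haw
    have := hvC hav
    simp only [Cσ, mem_sdiff, mem_univ, true_and] at this
    exact this (Finset.mem_sup.mpr ⟨w, hw, haw⟩)
  · rintro ⟨hC, j, hji, hjσ⟩
    refine ⟨hkg, ?_⟩
    rintro ⟨v, hv2, hv⟩
    -- v ⊆ Cσ σ = {i, i+1}
    have hvC : v ⊆ Cσ σ := by
      intro a hav
      simp only [Cσ, mem_sdiff, mem_univ, true_and]
      intro hS
      rw [Finset.mem_sup] at hS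
      obtain ⟨u, hu, hau⟩ := hS
      exact (Finset.disjoint_left.mp (hv u hu).1.2.2 hav) hau
    rw [hC] at hvC
    have hveq : v = ({i, i + 1} : Vtx k) :=
      Finset.eq_of_subset_of_card_le hvC (by rw [hv2, pair_card])
    have := (hv _ hjσ).2
    rcases this with h | h
    · exact pair_not_stable i (hveq ▸ h)
    · exact pair_not_stable j h
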